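/- The variance of the discrete Gaussian N_ℤ(0, σ²) is strictly less than σ² for every σ > 0. -/

import Mathlib

open Real Filter Set

noncomputable def Sth (c : ℝ) : ℝ := ∑' n : ℤ, Real.exp (-c * (n : ℝ)^2)
noncomputable def Tth (c : ℝ) : ℝ := ∑' n : ℤ, (n : ℝ)^2 * Real.exp (-c * (n : ℝ)^2)

lemma summable_nat_aux {c : ℝ} (hc : 0 < c) (k : ℕ) :
    Summable (fun n : ℕ ↦ (n : ℝ)^k * Real.exp (-c * (n : ℝ)^2)) := by
  refine Summable.of_nonneg_of_le (fun n => by positivity) (fun n => ?_)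
    (summable_pow_mul_exp_neg_nat_mul k hc)
  have h1 : (n : ℝ) ≤ (n : ℝ)^2 := by
    exact_mod_cast Nat.le_self_pow two_ne_zero n
  exact mul_le_mul_of_nonneg_left (Real.exp_le_exp.mpr (by nlinarith)) (by positivity)

lemma summable_int_aux {c : ℝ} (hc : 0 < c) (k : ℕ) :
    Summable (fun n : ℤ ↦ (n : ℝ)^(2*k) * Real.exp (-c * (n : ℝ)^2)) := by
  apply Summable.of_nat_of_neg
  · exact summable_nat_aux hc (2*k)
  · simpa only [Int.cast_neg, Int.cast_natCast, neg_sq, Even.neg_pow (even_two_mul k)]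
      using summable_nat_aux hc (2*k)

lemma summable_S {c : ℝ} (hc : 0 < c) :
    Summable (fun n : ℤ ↦ Real.exp (-c * (n : ℝ)^2)) := by
  simpa using summable_int_aux hc 0

lemma summable_T {c : ℝ} (hc : 0 < c) :
    Summable (fun n : ℤ ↦ (n : ℝ)^2 * Real.exp (-c * (n : ℝ)^2)) := by
  simpa using summable_int_aux hc 1

lemma S_pos {c : ℝ} (hc : 0 < c) : 0 < Sth c :=
  Summable.tsum_pos (summable_S hc) (fun n => (Real.exp_pos _).le) 0 (Real.exp_pos _)

lemma T_pos {c : ℝ} (hc : 0 < c) : 0 < Tth c := by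
  refine Summable.tsum_pos (summable_T hc) (fun n => by positivity) 1 ?_
  norm_num [Real.exp_pos]

lemma hasDerivAt_S {c : ℝ} (hc : 0 < c) : HasDerivAt Sth (-(Tth c)) c := by
  have key : HasDerivAt (fun z : ℝ => ∑' n : ℤ, Real.exp (-z * (n : ℝ)^2))
      (∑' n : ℤ, Real.exp (-c * (n : ℝ)^2) * (-(n : ℝ)^2)) c := by
    refine hasDerivAt_tsum_of_isPreconnected
      (u := fun n : ℤ => (n : ℝ)^2 * Real.exp (-(c/2) * (n : ℝ)^2))
      (summable_T (half_pos hc)) (isOpen_Ioi (a := c/2)) (isPreconnected_Ioi)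
      (g' := fun n y => Real.exp (-y * (n : ℝ)^2) * (-(n : ℝ)^2))
      (fun n y _ => ?_) (fun n y hy => ?_) (half_lt_self hc) (summable_S hc)
      (half_lt_self hc)
    · have h : HasDerivAt (fun z : ℝ => -z * (n : ℝ)^2) (-(n : ℝ)^2) y := by
        simpa using ((hasDerivAt_id y).neg.mul_const ((n : ℝ)^2))
      exact h.exp
    · rw [Real.norm_eq_abs, abs_mul, abs_neg, abs_of_pos (Real.exp_pos _),
        abs_of_nonneg (sq_nonneg _), mul_comm]
      have : Real.exp (-y * (n:ℝ)^2) ≤ Real.exp (-(c/2) * (n:ℝ)^2) := by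
        apply Real.exp_le_exp.mpr
        have hy' : c/2 ≤ y := le_of_lt hy
        nlinarith [sq_nonneg ((n:ℝ))]
      exact mul_le_mul_of_nonneg_left this (sq_nonneg _)
  have h2 : (∑' n : ℤ, Real.exp (-c * (n : ℝ)^2) * (-(n : ℝ)^2)) = -(Tth c) := by
    rw [Tth, ← tsum_neg]
    exact tsum_congr fun n => by ring
  rw [h2] at key
  exact key

lemma S_eq {c : ℝ} (hc : 0 < c) :
    Sth c = Real.sqrt π * c ^ (-(1/2) : ℝ) * Sth (π^2 / c) := by
  have hπ : (0:ℝ) < π := Real.pi_pos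
  have ha : 0 < c / π := div_pos hc hπ
  have h := Real.tsum_exp_neg_mul_int_sq ha
  have h1 : ∀ n : ℤ, -π * (c/π) * (n:ℝ)^2 = -c * (n:ℝ)^2 := by
    intro n; field_simp
  have h2 : ∀ n : ℤ, -π / (c/π) * (n:ℝ)^2 = -(π^2/c) * (n:ℝ)^2 := by
    intro n; field_simp
  simp only [h1, h2] at h
  rw [Sth, Sth, h]
  congr 1
  rw [← Real.sqrt_eq_rpow, Real.sqrt_div hc.le, one_div, inv_div,
    Real.rpow_neg hc.le, ← Real.sqrt_eq_rpow, div_eq_mul_inv]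

lemma key_ineq {c : ℝ} (hc : 0 < c) : Tth c < (1 / (2*c)) * Sth c := by
  have hπ : (0:ℝ) < π := Real.pi_pos
  have hπc : 0 < π^2 / c := by positivity
  -- derivative of the RHS of S_eq
  have h1 : HasDerivAt (fun x : ℝ => x ^ (-(1/2) : ℝ)) ((-(1/2)) * c ^ (-(3/2) : ℝ)) c := by
    have := Real.hasDerivAt_rpow_const (x := c) (p := (-(1/2) : ℝ)) (Or.inl hc.ne')
    convert this using 2
    norm_num
  have h2 : HasDerivAt (fun x : ℝ => π^2 / x) (-(π^2 / c^2)) c := by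
    have := (hasDerivAt_inv hc.ne').const_mul (π^2)
    simpa [div_eq_mul_inv, neg_div, mul_div_assoc] using this
  have h3 : HasDerivAt Sth (-(Tth (π^2/c))) (π^2/c) := hasDerivAt_S hπc
  have h4 : HasDerivAt (fun x : ℝ => Sth (π^2 / x))
      (Tth (π^2/c) * (π^2 / c^2)) c := by
    have := h3.comp c h2
    rw [neg_mul_neg] at this
    exact this
  have h5 : HasDerivAt (fun x : ℝ => Real.sqrt π * x ^ (-(1/2) : ℝ) * Sth (π^2/x))
      ((Real.sqrt π * ((-(1/2)) * c ^ (-(3/2) : ℝ))) * Sth (π^2/c)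
        + (Real.sqrt π * c ^ (-(1/2) : ℝ)) * (Tth (π^2/c) * (π^2 / c^2))) c :=
    (h1.const_mul (Real.sqrt π)).mul h4
  have hSG : Sth =ᶠ[nhds c] (fun x : ℝ => Real.sqrt π * x ^ (-(1/2) : ℝ) * Sth (π^2/x)) := by
    filter_upwards [Ioi_mem_nhds hc] with x hx
    exact S_eq hx
  have h6 : HasDerivAt Sth
      ((Real.sqrt π * ((-(1/2)) * c ^ (-(3/2) : ℝ))) * Sth (π^2/c)
        + (Real.sqrt π * c ^ (-(1/2) : ℝ)) * (Tth (π^2/c) * (π^2 / c^2))) c :=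
    h5.congr_of_eventuallyEq hSG
  have heq := (hasDerivAt_S hc).unique h6
  -- rpow arithmetic
  have hr : c ^ (-(3/2) : ℝ) = (1/c) * c ^ (-(1/2) : ℝ) := by
    rw [one_div, ← Real.rpow_neg_one c, ← Real.rpow_add hc]
    norm_num
  -- positivity of the correction term
  have hQ : 0 < Tth (π^2/c) := T_pos hπc
  have hpos : 0 < (Real.sqrt π * c ^ (-(1/2) : ℝ)) * (Tth (π^2/c) * (π^2 / c^2)) := by
    have h1 : 0 < Real.sqrt π * c ^ (-(1/2) : ℝ) := by positivity
    have h2 : 0 < π^2 / c^2 := by positivity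
    exact mul_pos h1 (mul_pos hQ h2)
  have hS : Sth c = Real.sqrt π * c ^ (-(1/2) : ℝ) * Sth (π^2/c) := S_eq hc
  rw [hr] at heq
  have : Tth c = (1/(2*c)) * Sth c
      - (Real.sqrt π * c ^ (-(1/2) : ℝ)) * (Tth (π^2/c) * (π^2 / c^2)) := by
    rw [hS]; linear_combination -heq
  linarith

theorem discrete_gaussian_variance_lt (σ : ℝ) (hσ : 0 < σ) :
    (∑' x : ℤ, (x : ℝ)^2 *
        (Real.exp (-(x : ℝ)^2 / (2 * σ^2)) /
          ∑' y : ℤ, Real.exp (-(y : ℝ)^2 / (2 * σ^2)))) < σ^2 := by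
  set c : ℝ := 1 / (2 * σ^2) with hcdef
  have hc : 0 < c := by positivity
  have hexp : ∀ x : ℤ, -(x : ℝ)^2 / (2 * σ^2) = -c * (x : ℝ)^2 := by
    intro x; rw [hcdef]; ring
  have hS : (∑' y : ℤ, Real.exp (-(y : ℝ)^2 / (2 * σ^2))) = Sth c := by
    rw [Sth]; exact tsum_congr fun y => by rw [hexp]
  have hgoal : (∑' x : ℤ, (x : ℝ)^2 *
      (Real.exp (-(x : ℝ)^2 / (2 * σ^2)) /
        ∑' y : ℤ, Real.exp (-(y : ℝ)^2 / (2 * σ^2)))) = Tth c / Sth c := by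
    rw [Tth, ← tsum_div_const]
    exact tsum_congr fun x => by rw [hexp, hS, mul_div_assoc]
  rw [hgoal, div_lt_iff₀ (S_pos hc)]
  have hσ2 : σ^2 = 1 / (2*c) := by
    rw [hcdef]; field_simp
  rw [hσ2]
  exact key_ineq hc
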